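/- Let n ≥ 3 be an integer and F a finite field with q elements. The number of pairs (h0, h1) ∈ Fⁿ × Fⁿ such that every entry of h0 is nonzero, every entry of h1 is nonzero, and for all indices 1 ≤ i < j ≤ n one has h0,i·h1,j − h0,j·h1,i ≠ 0, equals (q−1)^(n+1)·∏_{i=2}^{n}(q−i). -/

import Mathlib

private lemma aux_desc (q n : ℕ) (hn : 1 ≤ n) :
    (q - 1).descFactorial n = (q - 1) * ∏ i ∈ Finset.Icc 2 n, (q - i) := by
  obtain ⟨m, rfl⟩ : ∃ m, n = m + 1 := ⟨n - 1, (Nat.succ_pred_eq_of_pos hn).symm⟩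
  rw [Nat.descFactorial_eq_prod_range, Finset.prod_range_succ']
  have h1 : Finset.Icc 2 (m + 1) = Finset.Ico 2 (m + 2) := by
    exact (Finset.Ico_add_one_right_eq_Icc 2 (m + 1)).symm
  rw [h1, Finset.prod_Ico_eq_prod_range, mul_comm]
  exact congrArg₂ (· * ·) (by omega) (Finset.prod_congr rfl fun i _ => by omega)

theorem stmt4 (n : ℕ) (hn : 3 ≤ n) (F : Type*) [Field F] [Fintype F] :
    Nat.card {p : (Fin n → F) × (Fin n → F) //
      (∀ i, p.1 i ≠ 0) ∧ (∀ i, p.2 i ≠ 0) ∧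
      ∀ i j : Fin n, i < j → p.1 i * p.2 j - p.1 j * p.2 i ≠ 0}
    = (Fintype.card F - 1) ^ (n + 1) * ∏ i ∈ Finset.Icc 2 n, (Fintype.card F - i) := by
  classical
  set S := {p : (Fin n → F) × (Fin n → F) //
      (∀ i, p.1 i ≠ 0) ∧ (∀ i, p.2 i ≠ 0) ∧
      ∀ i j : Fin n, i < j → p.1 i * p.2 j - p.1 j * p.2 i ≠ 0} with hS
  let f : (Fin n → Fˣ) × (Fin n ↪ Fˣ) → S := fun x =>
    ⟨((fun i => (x.1 i : F)), (fun i => (x.1 i : F) * (x.2 i : F))), by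
      refine ⟨fun i => Units.ne_zero _, fun i => mul_ne_zero (Units.ne_zero _) (Units.ne_zero _), ?_⟩
      intro i j hij
      have hr : (x.2 i : F) ≠ (x.2 j : F) := by
        intro h
        exact hij.ne (x.2.injective (Units.ext h))
      have : (x.1 i : F) * ((x.1 j : F) * (x.2 j : F)) - (x.1 j : F) * ((x.1 i : F) * (x.2 i : F))
          = (x.1 i : F) * (x.1 j : F) * ((x.2 j : F) - (x.2 i : F)) := by ring
      rw [this]
      exact mul_ne_zero (mul_ne_zero (Units.ne_zero _) (Units.ne_zero _))
        (sub_ne_zero.2 (Ne.symm hr))⟩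
  have hbij : Function.Bijective f := by
    constructor
    · intro x y hxy
      have h1 : ∀ i, (x.1 i : F) = (y.1 i : F) := fun i =>
        congrFun (congrArg (fun p : S => p.1.1) hxy) i
      have h2 : ∀ i, (x.1 i : F) * (x.2 i : F) = (y.1 i : F) * (y.2 i : F) := fun i =>
        congrFun (congrArg (fun p : S => p.1.2) hxy) i
      have hx1 : x.1 = y.1 := funext fun i => Units.ext (h1 i)
      have hx2 : x.2 = y.2 := by
        ext i
        have := h2 i
        rw [h1 i] at this
        exact mul_left_cancel₀ (Units.ne_zero (y.1 i)) this
      exact Prod.ext hx1 hx2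
    · rintro ⟨⟨h0, h1⟩, H0, H1, H2⟩
      refine ⟨⟨fun i => Units.mk0 (h0 i) (H0 i),
        ⟨fun i => Units.mk0 (h1 i / h0 i) (div_ne_zero (H1 i) (H0 i)), ?_⟩⟩, ?_⟩
      · intro i j hij
        rw [Units.mk0_inj, div_eq_div_iff (H0 i) (H0 j)] at hij
        by_contra hne
        rcases lt_trichotomy i j with h | h | h
        · exact H2 i j h (by linear_combination -hij)
        · exact hne h
        · exact H2 j i h (by linear_combination hij)
      · apply Subtype.ext
        refine Prod.ext rfl (funext fun i => ?_)
        simp only [f, Units.val_mk0, Function.Embedding.coeFn_mk]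
        exact mul_div_cancel₀ _ (H0 i)
  rw [← Nat.card_eq_of_bijective f hbij]
  rw [Nat.card_eq_fintype_card, Fintype.card_prod, Fintype.card_fun,
    Fintype.card_embedding_eq, Fintype.card_fin, Fintype.card_units,
    aux_desc _ _ (by omega), ← mul_assoc, pow_succ]
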